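/- arXiv:1609.09594 — 11 statements merged into one kernel-verified Lean document; each statement's English description precedes it below -/
import Mathlib

section
/- Let A, σ, γ, v0 be positive real numbers and define v(t) = v0·exp(−σt). Fix t_s ∈ ℝ and let t_c ∈ [t_s, t_s + γ]. Then the set [v(t_s), v(t_s)·exp(Aγ)] ∪ [−v(t_s)·exp(Aγ), −v(t_s)] is contained in the set [v(t_c), v(t_c)·exp((A+σ)γ)] ∪ [−v(t_c)·exp((A+σ)γ), −v(t_c)]. -/
/-- Lemma 1 of the paper: the sensor's uncertainty set Ω(z(t_c)|t_s) is contained in the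
controller's uncertainty set Ω(z(t_c)|t_c). -/
theorem sensor_uncertainty_subset_controller_uncertainty
    (A σ γ v0 : ℝ) (hA : 0 < A) (hσ : 0 < σ) (hγ : 0 < γ) (hv0 : 0 < v0)
    (v : ℝ → ℝ) (hv : ∀ t, v t = v0 * Real.exp (-σ * t))
    (ts tc : ℝ) (htc : tc ∈ Set.Icc ts (ts + γ)) :
    (Set.Icc (v ts) (v ts * Real.exp (A * γ)) ∪
      Set.Icc (-(v ts * Real.exp (A * γ))) (-(v ts))) ⊆
    (Set.Icc (v tc) (v tc * Real.exp ((A + σ) * γ)) ∪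
      Set.Icc (-(v tc * Real.exp ((A + σ) * γ))) (-(v tc))) := by
  obtain ⟨h1, h2⟩ := htc
  have hlo : v tc ≤ v ts := by
    rw [hv, hv]
    have := Real.exp_le_exp.mpr (by nlinarith : -σ * tc ≤ -σ * ts)
    nlinarith
  have hhi : v ts * Real.exp (A * γ) ≤ v tc * Real.exp ((A + σ) * γ) := by
    rw [hv, hv]
    rw [mul_assoc, mul_assoc, ← Real.exp_add, ← Real.exp_add]
    have := Real.exp_le_exp.mpr (by nlinarith : -σ * ts + A * γ ≤ -σ * tc + (A + σ) * γ)
    nlinarith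
  intro x hx
  rcases hx with hx | hx
  · exact Or.inl ⟨le_trans hlo hx.1, le_trans hx.2 hhi⟩
  · exact Or.inr ⟨by linarith [hx.1], by linarith [hx.2]⟩
end

section
/- Let A, σ, γ, v0 > 0 and 0 < ρ0 < 1, and set v(t) = v0·exp(−σt). Suppose t_s ≤ t_c ≤ t_s′ are real numbers and z′ ∈ ℝ satisfies |z′| ≤ ρ0·exp(−σγ)·v(t_s) and |z′|·exp(A·(t_s′ − t_c)) = v(t_s′). Then t_s′ − t_s ≥ (−ln(ρ0·exp(−σγ)))/(A+σ), and this lower bound is a positive real number. -/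
/-- Uniform positive lower bound on a triggering interval (rules out Zeno behavior). -/
theorem triggering_interval_lower_bound
    (A σ γ v0 ρ0 : ℝ) (hA : 0 < A) (hσ : 0 < σ) (hγ : 0 < γ) (hv0 : 0 < v0)
    (hρ0 : 0 < ρ0) (hρ1 : ρ0 < 1)
    (v : ℝ → ℝ) (hv : ∀ t, v t = v0 * Real.exp (-σ * t))
    (ts tc ts' z' : ℝ) (h1 : ts ≤ tc) (h2 : tc ≤ ts')
    (hz : |z'| ≤ ρ0 * Real.exp (-σ * γ) * v ts)
    (htrig : |z'| * Real.exp (A * (ts' - tc)) = v ts') :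
    ts' - ts ≥ (-Real.log (ρ0 * Real.exp (-σ * γ))) / (A + σ) ∧
      0 < (-Real.log (ρ0 * Real.exp (-σ * γ))) / (A + σ) := by
  set ρ := ρ0 * Real.exp (-σ * γ) with hρdef
  have hρpos : 0 < ρ := mul_pos hρ0 (Real.exp_pos _)
  have hρlt1 : ρ < 1 := by
    have h1' : Real.exp (-σ * γ) < 1 := by
      rw [Real.exp_lt_one_iff]
      nlinarith
    nlinarith [Real.exp_pos (-σ * γ)]
  have hlogneg : Real.log ρ < 0 := Real.log_neg hρpos hρlt1
  have hAσ : 0 < A + σ := by linarith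
  have hpos : 0 < (-Real.log ρ) / (A + σ) := div_pos (by linarith) hAσ
  -- main inequality
  have hz' : v0 * Real.exp (-σ * ts') = |z'| * Real.exp (A * (ts' - tc)) := by
    rw [htrig, hv]
  have hkey : v0 * Real.exp (-σ * ts' - A * (ts' - tc)) ≤ v0 * Real.exp (Real.log ρ + (-σ * ts)) := by
    rw [Real.exp_add, Real.exp_log hρpos, Real.exp_sub]
    have h3 : v0 * Real.exp (-σ * ts') / Real.exp (A * (ts' - tc)) = |z'| := by
      rw [hz']
      field_simp
    rw [← mul_div_assoc, h3]
    calc |z'| ≤ ρ * v ts := hz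
      _ = v0 * (ρ * Real.exp (-σ * ts)) := by rw [hv]; ring
  have hle : -σ * ts' - A * (ts' - tc) ≤ Real.log ρ + (-σ * ts) := by
    have := (mul_le_mul_iff_right₀ hv0).mp hkey
    exact Real.exp_le_exp.mp this
  have hmono : A * (ts' - ts) ≥ A * (ts' - tc) := by nlinarith
  have hmain : (A + σ) * (ts' - ts) ≥ -Real.log ρ := by nlinarith
  refine ⟨?_, hpos⟩
  rw [ge_iff_le, div_le_iff₀ hAσ]
  nlinarith
end

section
/- Let A, σ, γ, v0 > 0 and 0 < ρ0 < 1, and set v(t) = v0·exp(−σt). Let (t_s^k)_{k∈ℕ} and (t_c^k)_{k∈ℕ} be real sequences with t_s^k ≤ t_c^k ≤ t_s^{k+1} for all k, and let (z_k)_{k∈ℕ} be reals with |z_k| ≤ ρ0·exp(−σγ)·v(t_s^k) and |z_k|·exp(A·(t_s^{k+1} − t_c^k)) = v(t_s^{k+1}) for all k. Then limsup_{N→∞} N / (Σ_{k=1}^N (t_s^{k+1} − t_s^k)) ≤ (A+σ)/(−ln(ρ0·exp(−σγ))). -/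
open Filter

/-- Lemma 3 ('Lemma1') of the paper: upper bound on the triggering rate. -/
theorem triggering_rate_upper_bound
    (A σ γ v0 ρ0 : ℝ) (hA : 0 < A) (hσ : 0 < σ) (hγ : 0 < γ) (hv0 : 0 < v0)
    (hρ0 : 0 < ρ0) (hρ1 : ρ0 < 1)
    (v : ℝ → ℝ) (hv : ∀ t, v t = v0 * Real.exp (-σ * t))
    (ts tc : ℕ → ℝ) (z : ℕ → ℝ)
    (horder : ∀ k, ts k ≤ tc k ∧ tc k ≤ ts (k + 1))
    (hz : ∀ k, |z k| ≤ ρ0 * Real.exp (-σ * γ) * v (ts k))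
    (htrig : ∀ k, |z k| * Real.exp (A * (ts (k + 1) - tc k)) = v (ts (k + 1))) :
    Filter.limsup
      (fun N : ℕ => (N : ℝ) / ∑ k ∈ Finset.Icc 1 N, (ts (k + 1) - ts k))
      Filter.atTop
      ≤ (A + σ) / (-Real.log (ρ0 * Real.exp (-σ * γ))) := by
  set ρ : ℝ := ρ0 * Real.exp (-σ * γ) with hρdef
  have hρpos : 0 < ρ := mul_pos hρ0 (Real.exp_pos _)
  have hρlt1 : ρ < 1 := by
    have h1 : Real.exp (-σ * γ) < 1 := by
      rw [Real.exp_lt_one_iff]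
      nlinarith
    nlinarith [Real.exp_pos (-σ * γ)]
  have hlogneg : Real.log ρ < 0 := Real.log_neg hρpos hρlt1
  have hAσ : 0 < A + σ := by linarith
  set c : ℝ := (-Real.log ρ) / (A + σ) with hcdef
  have hc : 0 < c := div_pos (by linarith) hAσ
  -- key per-step lower bound
  have key : ∀ k, c ≤ ts (k + 1) - ts k := by
    intro k
    have h1 := htrig k
    have h2 := hz k
    rw [hv] at h1 h2
    have hord := horder k
    have hΔnn : ts k ≤ ts (k + 1) := le_trans hord.1 hord.2
    have hmono : Real.exp (A * (ts (k + 1) - tc k)) ≤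
        Real.exp (A * (ts (k + 1) - ts k)) := by
      apply Real.exp_le_exp.2
      nlinarith [hord.1]
    have hstep : v0 * Real.exp (-σ * ts (k + 1)) ≤
        ρ * (v0 * Real.exp (-σ * ts k)) * Real.exp (A * (ts (k + 1) - ts k)) := by
      rw [← h1]
      apply mul_le_mul h2 hmono (Real.exp_pos _).le
      positivity
    have hexp : Real.exp (-σ * ts (k + 1)) ≤
        Real.exp (Real.log ρ + (-σ * ts k) + A * (ts (k + 1) - ts k)) := by
      have : Real.exp (Real.log ρ + (-σ * ts k) + A * (ts (k + 1) - ts k)) =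
          ρ * Real.exp (-σ * ts k) * Real.exp (A * (ts (k + 1) - ts k)) := by
        rw [Real.exp_add, Real.exp_add, Real.exp_log hρpos]
      rw [this]
      have := (mul_le_mul_iff_right₀ hv0).1 (by linarith [hstep] :
        v0 * Real.exp (-σ * ts (k + 1)) ≤
          v0 * (ρ * Real.exp (-σ * ts k) * Real.exp (A * (ts (k + 1) - ts k)))) 
      exact this
    have hlin : -σ * ts (k + 1) ≤ Real.log ρ + (-σ * ts k) + A * (ts (k + 1) - ts k) :=
      Real.exp_le_exp.1 hexp
    rw [hcdef, div_le_iff₀ hAσ]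
    nlinarith
  -- pointwise bound on the sequence
  have hbound : ∀ N : ℕ, (N : ℝ) / ∑ k ∈ Finset.Icc 1 N, (ts (k + 1) - ts k) ≤ 1 / c := by
    intro N
    rcases Nat.eq_zero_or_pos N with hN | hN
    · simp [hN]
      positivity
    · have hsum : (N : ℝ) * c ≤ ∑ k ∈ Finset.Icc 1 N, (ts (k + 1) - ts k) := by
        calc (N : ℝ) * c = ∑ k ∈ Finset.Icc 1 N, c := by
              rw [Finset.sum_const, Nat.card_Icc]
              simp [nsmul_eq_mul]
            _ ≤ _ := Finset.sum_le_sum fun k _ => key k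
      have hNpos : (0 : ℝ) < N := Nat.cast_pos.2 hN
      have hsumpos : 0 < ∑ k ∈ Finset.Icc 1 N, (ts (k + 1) - ts k) := by
        calc (0:ℝ) < (N:ℝ) * c := by positivity
          _ ≤ _ := hsum
      rw [div_le_div_iff₀ hsumpos hc]
      nlinarith
  have hnonneg : ∀ N : ℕ, 0 ≤ (N : ℝ) / ∑ k ∈ Finset.Icc 1 N, (ts (k + 1) - ts k) := by
    intro N
    rcases Nat.eq_zero_or_pos N with hN | hN
    · simp [hN]
    · have hsum : 0 ≤ ∑ k ∈ Finset.Icc 1 N, (ts (k + 1) - ts k) :=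
        Finset.sum_nonneg fun k _ => le_trans hc.le (key k)
      positivity
  have hrhs : (1 : ℝ) / c = (A + σ) / (-Real.log ρ) := by
    rw [hcdef]
    rw [one_div_div]
  rw [← hrhs]
  have hbd : Filter.IsBoundedUnder (· ≥ ·) Filter.atTop
      (fun N : ℕ => (N : ℝ) / ∑ k ∈ Finset.Icc 1 N, (ts (k + 1) - ts k)) :=
    Filter.isBoundedUnder_of ⟨0, fun N => hnonneg N⟩
  exact Filter.limsup_le_of_le hbd.isCoboundedUnder_le
    (Filter.Eventually.of_forall hbound)
end

section
/- Let A, σ, γ, v0 > 0, 0 < ρ0 < 1, ν ≥ 1, and set v(t) = v0·exp(−σt) and β = (1/A)·ln(1 + 2ρ0·exp(−σγ)). Suppose t_s ≤ t_c ≤ t_s + β, t_c ≤ t_s′, and z′ ∈ ℝ satisfies |z′| ≥ (1/ν)·ρ0·exp(−σγ)·v(t_s) and |z′|·exp(A·(t_s′ − t_c)) = v(t_s′). Then t_s′ − t_s ≤ (ln ν + ln(2 + exp(σγ)/ρ0))/(A+σ). -/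
/-- Per-interval upper bound on the triggering interval under ν-precision quantization
(underlying Lemma 4 of the paper). -/
theorem triggering_interval_upper_bound
    (A σ γ v0 ρ0 ν : ℝ) (hA : 0 < A) (hσ : 0 < σ) (hγ : 0 < γ) (hv0 : 0 < v0)
    (hρ0 : 0 < ρ0) (hρ1 : ρ0 < 1) (hν : 1 ≤ ν)
    (v : ℝ → ℝ) (hv : ∀ t, v t = v0 * Real.exp (-σ * t))
    (β : ℝ) (hβ : β = (1 / A) * Real.log (1 + 2 * ρ0 * Real.exp (-σ * γ)))
    (ts tc ts' z' : ℝ) (h1 : ts ≤ tc) (h2 : tc ≤ ts + β) (h3 : tc ≤ ts')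
    (hz : |z'| ≥ (1 / ν) * ρ0 * Real.exp (-σ * γ) * v ts)
    (htrig : |z'| * Real.exp (A * (ts' - tc)) = v ts') :
    ts' - ts ≤ (Real.log ν + Real.log (2 + Real.exp (σ * γ) / ρ0)) / (A + σ) := by
  have hν0 : (0:ℝ) < ν := lt_of_lt_of_le one_pos hν
  have hE : (0:ℝ) < Real.exp (-σ * γ) := Real.exp_pos _
  have hvpos : 0 < v ts := by rw [hv]; positivity
  have hzpos : 0 < |z'| := lt_of_lt_of_le (by positivity) hz
  -- (1) log of the trigger equation
  have h1eq : Real.log |z'| + A * (ts' - tc) = Real.log v0 + (-σ * ts') := by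
    have := congrArg Real.log htrig
    rw [Real.log_mul (ne_of_gt hzpos) (ne_of_gt (Real.exp_pos _)), Real.log_exp,
      hv, Real.log_mul (ne_of_gt hv0) (ne_of_gt (Real.exp_pos _)), Real.log_exp] at this
    linarith
  -- (2) log of the lower bound
  have h2le : -Real.log ν + Real.log ρ0 + (-σ * γ) + Real.log v0 + (-σ * ts)
      ≤ Real.log |z'| := by
    have hrhs : (0:ℝ) < (1 / ν) * ρ0 * Real.exp (-σ * γ) * v ts := by
      rw [hv]; positivity
    have := Real.log_le_log hrhs hz
    rw [hv] at this
    rw [Real.log_mul (by positivity) (by positivity),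
      Real.log_mul (by positivity) (ne_of_gt (Real.exp_pos _)),
      Real.log_mul (by positivity) (ne_of_gt hρ0),
      Real.log_mul (ne_of_gt hv0) (ne_of_gt (Real.exp_pos _)),
      Real.log_exp, Real.log_exp, Real.log_div one_ne_zero (ne_of_gt hν0),
      Real.log_one] at this
    linarith
  -- (4) A * β
  have h4 : A * β = Real.log (1 + 2 * ρ0 * Real.exp (-σ * γ)) := by
    rw [hβ]; field_simp
  -- (5) log identity
  have h5 : Real.log (2 + Real.exp (σ * γ) / ρ0)
      = Real.log (1 + 2 * ρ0 * Real.exp (-σ * γ)) + (σ * γ - Real.log ρ0) := by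
    have hid : 2 + Real.exp (σ * γ) / ρ0
        = (1 + 2 * ρ0 * Real.exp (-σ * γ)) * (Real.exp (σ * γ) / ρ0) := by
      have hee : Real.exp (-(σ * γ)) * Real.exp (σ * γ) = 1 := by
        rw [← Real.exp_add]; simp
      field_simp
      linear_combination (-2) * ρ0 * hee
    rw [hid, Real.log_mul (by positivity) (by positivity),
      Real.log_div (ne_of_gt (Real.exp_pos _)) (ne_of_gt hρ0), Real.log_exp]
  -- combine
  have hAσ : 0 < A + σ := by linarith
  rw [le_div_iff₀ hAσ]
  have h3' : A * tc ≤ A * ts + A * β := by nlinarith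
  nlinarith [h1eq, h2le, h4, h5, h3']
end

section
/- Let A, σ, γ > 0, 0 < ρ0 < 1, v_s > 0, and set ρ = ρ0·exp(−σγ)·v_s. If the set Ω = [v_s, v_s·exp(Aγ)] ∪ [−v_s·exp(Aγ), −v_s] is contained in the union of N closed intervals each of length at most 2ρ, then N ≥ (exp(Aγ) − 1)/(ρ0·exp(−σγ)). -/
/-- Lemma 2 of the paper (covering form): covering the sensor's uncertainty set by N
closed intervals of length at most 2ρ requires N ≥ (exp(Aγ) − 1)/(ρ0·exp(−σγ)). -/
theorem covering_sensor_uncertainty_lower_bound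
    (A σ γ ρ0 vs : ℝ) (hA : 0 < A) (hσ : 0 < σ) (hγ : 0 < γ)
    (hρ0 : 0 < ρ0) (hρ1 : ρ0 < 1) (hvs : 0 < vs)
    (ρ : ℝ) (hρ : ρ = ρ0 * Real.exp (-σ * γ) * vs)
    (N : ℕ) (a b : Fin N → ℝ)
    (hlen : ∀ i, b i - a i ≤ 2 * ρ)
    (hcov : (Set.Icc vs (vs * Real.exp (A * γ)) ∪
        Set.Icc (-(vs * Real.exp (A * γ))) (-vs)) ⊆ ⋃ i, Set.Icc (a i) (b i)) :
    (N : ℝ) ≥ (Real.exp (A * γ) - 1) / (ρ0 * Real.exp (-σ * γ)) := by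
  have hE : 1 < Real.exp (A * γ) := by
    have : (0:ℝ) < A * γ := by positivity
    calc (1:ℝ) = Real.exp 0 := Real.exp_zero.symm
    _ < Real.exp (A * γ) := Real.exp_lt_exp.mpr this
  set E := Real.exp (A * γ) with hEdef
  have hρpos : 0 < ρ := by rw [hρ]; positivity
  -- measure of the union of the two components
  have hdisj : Disjoint (Set.Icc vs (vs * E)) (Set.Icc (-(vs * E)) (-vs)) := by
    rw [Set.disjoint_left]
    intro x hx hx'
    have h1 : vs ≤ x := hx.1
    have h2 : x ≤ -vs := hx'.2
    linarith
  have hμ1 : MeasureTheory.volume (Set.Icc vs (vs * E)) = ENNReal.ofReal (vs * E - vs) := by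
    rw [Real.volume_Icc]
  have hμ2 : MeasureTheory.volume (Set.Icc (-(vs * E)) (-vs)) = ENNReal.ofReal (vs * E - vs) := by
    rw [Real.volume_Icc]; ring_nf
  have hμU : MeasureTheory.volume
      (Set.Icc vs (vs * E) ∪ Set.Icc (-(vs * E)) (-vs))
      = ENNReal.ofReal (vs * E - vs) + ENNReal.ofReal (vs * E - vs) := by
    rw [MeasureTheory.measure_union hdisj measurableSet_Icc, hμ1, hμ2]
  have hcover : MeasureTheory.volume
      (Set.Icc vs (vs * E) ∪ Set.Icc (-(vs * E)) (-vs))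
      ≤ (N : ℕ∞) * ENNReal.ofReal (2 * ρ) := by
    calc MeasureTheory.volume (Set.Icc vs (vs * E) ∪ Set.Icc (-(vs * E)) (-vs))
        ≤ MeasureTheory.volume (⋃ i, Set.Icc (a i) (b i)) := MeasureTheory.measure_mono hcov
      _ ≤ ∑' i : Fin N, MeasureTheory.volume (Set.Icc (a i) (b i)) :=
          MeasureTheory.measure_iUnion_le _
      _ ≤ ∑' _i : Fin N, ENNReal.ofReal (2 * ρ) := by
          apply ENNReal.tsum_le_tsum
          intro i
          rw [Real.volume_Icc]
          exact ENNReal.ofReal_le_ofReal (hlen i)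
      _ = (N : ℕ∞) * ENNReal.ofReal (2 * ρ) := by
          simp [tsum_fintype, Finset.sum_const, nsmul_eq_mul]
  -- convert to a real inequality
  have hle : 2 * (vs * E - vs) ≤ (N : ℝ) * (2 * ρ) := by
    have h1 : ENNReal.ofReal (2 * (vs * E - vs)) ≤ ENNReal.ofReal ((N : ℝ) * (2 * ρ)) := by
      rw [ENNReal.ofReal_mul (by positivity : (0:ℝ) ≤ (N:ℝ))]
      calc ENNReal.ofReal (2 * (vs * E - vs))
          = ENNReal.ofReal (vs * E - vs) + ENNReal.ofReal (vs * E - vs) := by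
            rw [← ENNReal.ofReal_add (by nlinarith) (by nlinarith)]; ring_nf
        _ ≤ (N : ℕ∞) * ENNReal.ofReal (2 * ρ) := hμU ▸ hcover
        _ = ENNReal.ofReal (N : ℝ) * ENNReal.ofReal (2 * ρ) := by
            simp [ENNReal.ofReal_natCast]
    have := (ENNReal.ofReal_le_ofReal_iff (by positivity)).mp h1
    exact this
  rw [hρ] at hle
  rw [ge_iff_le, div_le_iff₀ (by positivity)]
  nlinarith [Real.exp_pos (-σ * γ)]
end

section
/- Let A, σ > 0, t ≥ 0, L > 0. (i) For every α ∈ ℝ, the set {x ∈ ℝ : |exp(At)·x + α| ≤ L·exp(−σt)} has Lebesgue measure 2L·exp(−(A+σ)t). (ii) Consequently, if [−L, L] ⊆ ⋃_{i=1}^N {x ∈ ℝ : |exp(At)·x + α_i| ≤ L·exp(−σt)} for some α_1, …, α_N ∈ ℝ, then N ≥ exp((A+σ)t). -/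
open MeasureTheory

lemma cover_vol_aux (c r : ℝ) (hc : 0 < c) (hr : 0 ≤ r) (α : ℝ) :
    volume {x : ℝ | |c * x + α| ≤ r} = ENNReal.ofReal (2 * r / c) := by
  have hset : {x : ℝ | |c * x + α| ≤ r} = Set.Icc ((-α - r) / c) ((-α + r) / c) := by
    ext x
    simp only [Set.mem_setOf_eq, Set.mem_Icc, abs_le, div_le_iff₀ hc, le_div_iff₀ hc]
    constructor <;> intro h <;> constructor <;> nlinarith [h.1, h.2]
  rw [hset, Real.volume_Icc]
  congr 1
  field_simp
  ring

/-- Covering argument proving Theorem 1(ii) of the paper. -/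
theorem initial_condition_covering_lower_bound
    (A σ : ℝ) (hA : 0 < A) (hσ : 0 < σ) (t : ℝ) (ht : 0 ≤ t) (L : ℝ) (hL : 0 < L) :
    (∀ α : ℝ,
      volume {x : ℝ | |Real.exp (A * t) * x + α| ≤ L * Real.exp (-σ * t)} =
        ENNReal.ofReal (2 * L * Real.exp (-(A + σ) * t))) ∧
    (∀ (N : ℕ) (α : Fin N → ℝ),
      Set.Icc (-L) L ⊆
        ⋃ i, {x : ℝ | |Real.exp (A * t) * x + α i| ≤ L * Real.exp (-σ * t)} →
      (N : ℝ) ≥ Real.exp ((A + σ) * t)) := by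
  have hc : (0:ℝ) < Real.exp (A * t) := Real.exp_pos _
  have hr : (0:ℝ) ≤ L * Real.exp (-σ * t) := le_of_lt (by positivity)
  have key : ∀ α : ℝ,
      volume {x : ℝ | |Real.exp (A * t) * x + α| ≤ L * Real.exp (-σ * t)} =
        ENNReal.ofReal (2 * L * Real.exp (-(A + σ) * t)) := by
    intro α
    rw [cover_vol_aux _ _ hc hr α]
    congr 1
    have he : Real.exp (-(A + σ) * t) * Real.exp (A * t) = Real.exp (-σ * t) := by
      rw [← Real.exp_add, show -(A + σ) * t + A * t = -σ * t by ring]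
    rw [div_eq_iff (ne_of_gt hc)]
    linear_combination -2 * L * he
  refine ⟨key, fun N α hcov => ?_⟩
  have hvol : volume (Set.Icc (-L) L) ≤
      N * ENNReal.ofReal (2 * L * Real.exp (-(A + σ) * t)) := by
    calc volume (Set.Icc (-L) L)
        ≤ ∑ i : Fin N, volume {x : ℝ | |Real.exp (A * t) * x + α i| ≤ L * Real.exp (-σ * t)} :=
          le_trans (measure_mono hcov) (measure_iUnion_fintype_le _ _)
      _ = ∑ _i : Fin N, ENNReal.ofReal (2 * L * Real.exp (-(A + σ) * t)) :=
          Finset.sum_congr rfl (fun i _ => key (α i))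
      _ = N * ENNReal.ofReal (2 * L * Real.exp (-(A + σ) * t)) := by
          rw [Finset.sum_const, Finset.card_univ, Fintype.card_fin, nsmul_eq_mul]
  rw [Real.volume_Icc] at hvol
  have h2L : (-L:ℝ) ≤ L := by linarith
  rw [show ((N:ENNReal)) = ENNReal.ofReal (N:ℝ) by simp,
      ← ENNReal.ofReal_mul (by positivity)] at hvol
  have hle : (L - (-L) : ℝ) ≤ (N:ℝ) * (2 * L * Real.exp (-(A + σ) * t)) :=
    (ENNReal.ofReal_le_ofReal_iff (by positivity)).mp hvol
  have hxp : Real.exp (-(A + σ) * t) * Real.exp ((A + σ) * t) = 1 := by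
    rw [← Real.exp_add, show -(A + σ) * t + (A + σ) * t = 0 by ring, Real.exp_zero]
  have hexp : (0:ℝ) < Real.exp (-(A+σ)*t) := Real.exp_pos _
  nlinarith [Real.exp_pos ((A+σ)*t), mul_pos hL hexp]
end

section
/- Let A, σ, γ, v0 > 0 and 0 < ρ0 < 1, and define v(t) = v0·exp(−σt). Suppose t_s ≤ t_c ≤ t_s + γ, ε ∈ {−1, 1}, and q ∈ ℝ satisfies |t_s − q| ≤ (1/(A+σ))·ln(1 + ρ0·exp(−(σ+A)γ)). Then |ε·v(t_s)·exp(A·(t_c − t_s)) − ε·v(q)·exp(A·(t_c − q))| ≤ ρ0·exp(−σγ)·v(t_s). -/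
lemma abs_one_sub_exp_le (x : ℝ) : |1 - Real.exp x| ≤ Real.exp |x| - 1 := by
  have h1 := Real.add_one_le_exp x
  have h2 := Real.add_one_le_exp (-x)
  have hm : Real.exp x * Real.exp (-x) = 1 := by rw [← Real.exp_add]; simp
  rcases abs_cases x with ⟨hx, hx0⟩ | ⟨hx, hx0⟩ <;> rw [hx] <;>
    rcases abs_cases (1 - Real.exp x) with ⟨h, _⟩ | ⟨h, _⟩ <;> rw [h] <;>
    nlinarith [Real.exp_pos x, Real.exp_pos (-x)]

/-- Lemma 5 of the paper: a sufficiently accurate time quantization guarantees the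
required post-jump error bound for every delay realization. -/
theorem time_quantization_post_jump_bound
    (A σ γ v0 ρ0 : ℝ) (hA : 0 < A) (hσ : 0 < σ) (hγ : 0 < γ) (hv0 : 0 < v0)
    (hρ0 : 0 < ρ0) (hρ1 : ρ0 < 1)
    (v : ℝ → ℝ) (hv : ∀ t, v t = v0 * Real.exp (-σ * t))
    (ts tc : ℝ) (h1 : ts ≤ tc) (h2 : tc ≤ ts + γ)
    (ε : ℝ) (hε : ε = -1 ∨ ε = 1)
    (q : ℝ)
    (hq : |ts - q| ≤ (1 / (A + σ)) * Real.log (1 + ρ0 * Real.exp (-(σ + A) * γ))) :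
    |ε * v ts * Real.exp (A * (tc - ts)) - ε * v q * Real.exp (A * (tc - q))| ≤
      ρ0 * Real.exp (-σ * γ) * v ts := by
  set B := A + σ with hBdef
  have hB : 0 < B := by positivity
  have hεabs : |ε| = 1 := by rcases hε with h | h <;> simp [h]
  -- rewrite the difference
  have key : ε * v ts * Real.exp (A * (tc - ts)) - ε * v q * Real.exp (A * (tc - q))
      = ε * v0 * Real.exp (A * tc) * (Real.exp (-B * ts) * (1 - Real.exp (B * (ts - q)))) := by
    rw [hv, hv]
    have e1 : Real.exp (-σ * ts) * Real.exp (A * (tc - ts))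
        = Real.exp (A * tc) * Real.exp (-B * ts) := by
      rw [← Real.exp_add, ← Real.exp_add]; congr 1; rw [hBdef]; ring
    have e2 : Real.exp (-σ * q) * Real.exp (A * (tc - q))
        = Real.exp (A * tc) * (Real.exp (-B * ts) * Real.exp (B * (ts - q))) := by
      rw [← Real.exp_add, ← Real.exp_add, ← Real.exp_add]; congr 1; rw [hBdef]; ring
    linear_combination ε * v0 * e1 - ε * v0 * e2
  rw [key, abs_mul, abs_mul, abs_mul, abs_mul, hεabs, abs_of_pos hv0,
    abs_of_pos (Real.exp_pos _), abs_of_pos (Real.exp_pos _), one_mul]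
  -- bound the last factor
  have hlog : 1 + ρ0 * Real.exp (-(σ + A) * γ) > 0 := by positivity
  have hbd : |1 - Real.exp (B * (ts - q))| ≤ ρ0 * Real.exp (-(σ + A) * γ) := by
    refine (abs_one_sub_exp_le _).trans ?_
    have h3 : |B * (ts - q)| ≤ Real.log (1 + ρ0 * Real.exp (-(σ + A) * γ)) := by
      rw [abs_mul, abs_of_pos hB]
      calc B * |ts - q| ≤ B * ((1 / B) * Real.log (1 + ρ0 * Real.exp (-(σ + A) * γ))) :=
            mul_le_mul_of_nonneg_left hq hB.le
        _ = Real.log (1 + ρ0 * Real.exp (-(σ + A) * γ)) := by field_simp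
    have := Real.exp_le_exp.mpr h3
    rw [Real.exp_log hlog] at this
    linarith
  calc v0 * Real.exp (A * tc) * (Real.exp (-B * ts) * |1 - Real.exp (B * (ts - q))|)
      ≤ v0 * Real.exp (A * tc) * (Real.exp (-B * ts) * (ρ0 * Real.exp (-(σ + A) * γ))) := by
        gcongr
    _ ≤ ρ0 * Real.exp (-σ * γ) * v ts := by
        rw [hv]
        have : Real.exp (A * tc) * Real.exp (-B * ts) * Real.exp (-(σ + A) * γ)
            ≤ Real.exp (-σ * γ) * Real.exp (-σ * ts) := by
          rw [← Real.exp_add, ← Real.exp_add, ← Real.exp_add]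
          apply Real.exp_le_exp.mpr
          rw [hBdef]; nlinarith
        have h4 := mul_le_mul_of_nonneg_left this (by positivity : (0:ℝ) ≤ ρ0 * v0)
        nlinarith [h4]
end

section
/- Let A, σ, γ > 0, 0 < ρ0 < 1, ν ≥ 2, v0 > 0, and define v(t) = v0·exp(−σt) and β = (1/A)·ln(1 + 2ρ0·exp(−σγ)). Suppose y ∈ ℝ satisfies y ≤ (1/(A+σ))·ln(1 − 1/((ν−1)·(2 + exp(σγ)/ρ0))). Then for every t_s ∈ ℝ and every Δ with β − (1/A)·ln(ν/(ν−1)) ≤ Δ ≤ β, one has v(t_s)·exp(AΔ)·|1 − exp((A+σ)·y)| ≥ (1/ν)·ρ0·exp(−σγ)·v(t_s). -/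
/-- Claim (a) in the proof of Theorem 4 of the paper: existence of delay values for which
the post-jump error is at least ρ(t_s)/ν. -/
theorem post_jump_error_lower_bound_for_delays
    (A σ γ ρ0 ν v0 : ℝ) (hA : 0 < A) (hσ : 0 < σ) (hγ : 0 < γ)
    (hρ0 : 0 < ρ0) (hρ1 : ρ0 < 1) (hν : 2 ≤ ν) (hv0 : 0 < v0)
    (v : ℝ → ℝ) (hv : ∀ t, v t = v0 * Real.exp (-σ * t))
    (β : ℝ) (hβ : β = (1 / A) * Real.log (1 + 2 * ρ0 * Real.exp (-σ * γ)))
    (y : ℝ)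
    (hy : y ≤ (1 / (A + σ)) *
        Real.log (1 - 1 / ((ν - 1) * (2 + Real.exp (σ * γ) / ρ0)))) :
    ∀ ts Δ : ℝ, β - (1 / A) * Real.log (ν / (ν - 1)) ≤ Δ → Δ ≤ β →
      v ts * Real.exp (A * Δ) * |1 - Real.exp ((A + σ) * y)| ≥
        (1 / ν) * ρ0 * Real.exp (-σ * γ) * v ts := by
  intro ts Δ h1 _h2
  have hν1 : (1:ℝ) < ν := by linarith
  have hAσ : (0:ℝ) < A + σ := by linarith
  set c := ρ0 * Real.exp (-σ * γ) with hcdef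
  have hc : 0 < c := by positivity
  have hEc : Real.exp (σ * γ) / ρ0 = 1 / c := by
    rw [hcdef, show -σ * γ = -(σ * γ) by ring, Real.exp_neg]
    field_simp
  set D := (ν - 1) * (2 + 1 / c) with hDdef
  have hD1 : (1:ℝ) < D := by
    have h1c : 0 < 1 / c := by positivity
    have : (1:ℝ) * 2 ≤ D := by
      apply mul_le_mul (by linarith) (by linarith) (by norm_num) (by linarith)
    linarith
  have hD0 : (0:ℝ) < D := by linarith
  have harg : 0 < 1 - 1 / D := by
    have : 1 / D < 1 := by
      rw [div_lt_one hD0]; exact hD1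
    linarith
  -- bound on exp((A+σ)y)
  have hy' : y ≤ (1 / (A + σ)) * Real.log (1 - 1 / D) := by
    rwa [hEc] at hy
  have hxy : (A + σ) * y ≤ Real.log (1 - 1 / D) := by
    have := mul_le_mul_of_nonneg_left hy' (le_of_lt hAσ)
    calc (A + σ) * y ≤ (A + σ) * ((1 / (A + σ)) * Real.log (1 - 1 / D)) := this
      _ = Real.log (1 - 1 / D) := by field_simp
  have hexp_le : Real.exp ((A + σ) * y) ≤ 1 - 1 / D := by
    calc Real.exp ((A + σ) * y) ≤ Real.exp (Real.log (1 - 1 / D)) :=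
          Real.exp_le_exp.mpr hxy
      _ = 1 - 1 / D := Real.exp_log harg
  have habs : |1 - Real.exp ((A + σ) * y)| ≥ 1 / D := by
    have hD' : 0 < 1 / D := by positivity
    have hnn : 0 ≤ 1 - Real.exp ((A + σ) * y) := by linarith
    rw [abs_of_nonneg hnn]
    linarith
  -- bound on exp(AΔ)
  have h2c : (0:ℝ) < 1 + 2 * c := by linarith
  have hAβ : A * β = Real.log (1 + 2 * c) := by
    rw [hβ, hcdef]; field_simp
  have hfrac : (0:ℝ) < (1 + 2 * c) * (ν - 1) / ν :=
    div_pos (mul_pos h2c (by linarith)) (by linarith)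
  have hAΔ : Real.log ((1 + 2 * c) * (ν - 1) / ν) ≤ A * Δ := by
    have hlog : Real.log ((1 + 2 * c) * (ν - 1) / ν)
        = Real.log (1 + 2 * c) - Real.log (ν / (ν - 1)) := by
      rw [Real.log_div (ne_of_gt (mul_pos h2c (by linarith))) (by linarith : (0:ℝ) < ν).ne',
          Real.log_mul (ne_of_gt h2c) (by linarith : (0:ℝ) < ν - 1).ne',
          Real.log_div (by linarith : (0:ℝ) < ν).ne' (by linarith : (0:ℝ) < ν - 1).ne']
      ring
    have := mul_le_mul_of_nonneg_left h1 (le_of_lt hA)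
    rw [mul_sub, hAβ] at this
    have hA1 : A * ((1 / A) * Real.log (ν / (ν - 1))) = Real.log (ν / (ν - 1)) := by
      field_simp
    rw [hA1] at this
    linarith [hlog ▸ this]
  have hexpΔ : (1 + 2 * c) * (ν - 1) / ν ≤ Real.exp (A * Δ) := by
    calc (1 + 2 * c) * (ν - 1) / ν = Real.exp (Real.log ((1 + 2 * c) * (ν - 1) / ν)) :=
          (Real.exp_log hfrac).symm
      _ ≤ Real.exp (A * Δ) := Real.exp_le_exp.mpr hAΔ
  -- combine
  have hvts : 0 < v ts := by rw [hv]; positivity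
  have hkey : (1 + 2 * c) * (ν - 1) / ν * (1 / D) = c / ν := by
    have hν0 : ν ≠ 0 := by linarith
    have hν1' : ν - 1 ≠ 0 := by linarith
    have hc0 : c ≠ 0 := ne_of_gt hc
    have h2c0 : 2 * c + 1 ≠ 0 := by linarith
    have h2c0' : 1 + 2 * c ≠ 0 := by linarith
    rw [hDdef]
    field_simp
    ring
  have hmain : v ts * Real.exp (A * Δ) * |1 - Real.exp ((A + σ) * y)|
      ≥ v ts * ((1 + 2 * c) * (ν - 1) / ν) * (1 / D) := by
    apply mul_le_mul
    · exact mul_le_mul_of_nonneg_left hexpΔ (le_of_lt hvts)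
    · exact habs
    · positivity
    · positivity
  have : v ts * ((1 + 2 * c) * (ν - 1) / ν) * (1 / D) = (1 / ν) * c * v ts := by
    rw [mul_assoc, hkey]; ring
  rw [this] at hmain
  calc v ts * Real.exp (A * Δ) * |1 - Real.exp ((A + σ) * y)|
      ≥ (1 / ν) * c * v ts := hmain
    _ = (1 / ν) * ρ0 * Real.exp (-σ * γ) * v ts := by rw [hcdef]; ring
end

section
/- Let n ≥ 1, let A be a real n×n matrix, let t > 0, σ > 0, L > 0, r > 0, and let α ∈ ℝⁿ (Euclidean space). Define Γ = {exp(tA)·x + α : ‖x‖ ≤ L}, the image of the closed Euclidean ball of radius L under the matrix exponential exp(tA) followed by translation by α. If Γ is contained in the union of N closed Euclidean balls of radius r·exp(−σt), then N ≥ exp((trace(A) + nσ)·t)·(L/r)ⁿ. -/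
open NormedSpace

lemma aux_entry_deriv (n : ℕ) (A : Matrix (Fin n) (Fin n) ℝ) (s : ℝ) (i j : Fin n) :
    HasDerivAt (fun u : ℝ => (exp (u • A)) i j) ((exp (s • A) * A) i j) s := by
  letI : SeminormedRing (Matrix (Fin n) (Fin n) ℝ) := Matrix.linftyOpSemiNormedRing
  letI : NormedRing (Matrix (Fin n) (Fin n) ℝ) := Matrix.linftyOpNormedRing
  letI : NormedAlgebra ℝ (Matrix (Fin n) (Fin n) ℝ) := Matrix.linftyOpNormedAlgebra
  haveI : CompleteSpace (Matrix (Fin n) (Fin n) ℝ) := FiniteDimensional.complete ℝ _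
  have hF : HasDerivAt (fun u : ℝ => exp (u • A)) (exp (s • A) * A) s :=
    hasDerivAt_exp_smul_const A s
  let L : Matrix (Fin n) (Fin n) ℝ →ₗ[ℝ] ℝ :=
    { toFun := fun M => M i j, map_add' := fun _ _ => rfl, map_smul' := fun _ _ => rfl }
  exact (L.toContinuousLinearMap.hasFDerivAt (x := exp (s • A))).comp_hasDerivAt s hF

lemma aux_prod_one_zero (n : ℕ) (σ : Equiv.Perm (Fin n)) (hσ : σ ≠ 1) (i : Fin n) :
    ∏ j ∈ Finset.univ.erase i, (1 : Matrix (Fin n) (Fin n) ℝ) (σ j) j = 0 := by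
  obtain ⟨j, hj⟩ : ∃ j, σ j ≠ j := by
    by_contra h
    push_neg at h
    exact hσ (Equiv.ext h)
  obtain ⟨k, hk1, hk2⟩ : ∃ k, σ k ≠ k ∧ k ≠ i := by
    by_cases hji : j = i
    · subst hji
      refine ⟨σ j, fun h => hj (σ.injective h), hj⟩
    · exact ⟨j, hj, hji⟩
  refine Finset.prod_eq_zero (Finset.mem_erase.2 ⟨hk2, Finset.mem_univ k⟩) ?_
  exact Matrix.one_apply_ne hk1

lemma aux_det_deriv_zero (n : ℕ) (A : Matrix (Fin n) (Fin n) ℝ) :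
    HasDerivAt (fun u : ℝ => (exp (u • A)).det) A.trace 0 := by
  have h1 : exp ((0:ℝ) • A) = (1 : Matrix (Fin n) (Fin n) ℝ) := by simp [exp_zero]
  have hfun : (fun u : ℝ => (exp (u • A)).det) =
      fun u => ∑ σ : Equiv.Perm (Fin n),
        (Equiv.Perm.sign σ : ℝ) * ∏ i, (exp (u • A)) (σ i) i := by
    funext u
    rw [Matrix.det_apply]
    simp [Units.smul_def, zsmul_eq_mul]
  rw [hfun]
  have hσ : ∀ σ : Equiv.Perm (Fin n),
      HasDerivAt (fun u : ℝ => (Equiv.Perm.sign σ : ℝ) * ∏ i, (exp (u • A)) (σ i) i)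
        ((Equiv.Perm.sign σ : ℝ) *
          ∑ i, (∏ j ∈ Finset.univ.erase i, (1 : Matrix (Fin n) (Fin n) ℝ) (σ j) j) *
            A (σ i) i) 0 := by
    intro σ
    refine HasDerivAt.const_mul _ ?_
    have hp := HasDerivAt.finset_prod (𝕜 := ℝ) (x := (0:ℝ)) (u := Finset.univ)
      (f := fun i u => (exp (u • A)) (σ i) i)
      (f' := fun i => ((1 : Matrix (Fin n) (Fin n) ℝ) * A) (σ i) i)
      (fun i _ => by simpa [h1] using aux_entry_deriv n A 0 (σ i) i)
    simp only [Finset.prod_fn] at hp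
    simpa [h1, smul_eq_mul] using hp
  have hsum := HasDerivAt.sum (u := (Finset.univ : Finset (Equiv.Perm (Fin n)))) (fun σ _ => hσ σ)
  simp only [Finset.sum_fn] at hsum
  refine hsum.congr_deriv (Eq.symm ?_)
  rw [Matrix.trace]
  rw [Finset.sum_eq_single (1 : Equiv.Perm (Fin n))]
  · simp only [Equiv.Perm.sign_one, Units.val_one, Int.cast_one, one_mul]
    refine Finset.sum_congr rfl fun i _ => ?_
    show A.diag i = (∏ j ∈ Finset.univ.erase i, (1 : Matrix (Fin n) (Fin n) ℝ) j j) * A i i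
    rw [Finset.prod_eq_one fun j _ => Matrix.one_apply_eq j, one_mul]
    rfl
  · intro σ _ hne
    rw [Finset.sum_congr rfl (fun i _ => by rw [aux_prod_one_zero n σ hne i, zero_mul])]
    simp
  · simp
open NormedSpace

lemma aux_det_exp (n : ℕ) (A : Matrix (Fin n) (Fin n) ℝ) (s : ℝ) :
    (exp (s • A)).det = Real.exp (A.trace * s) := by
  set φ : ℝ → ℝ := fun u => (exp (u • A)).det with hφ
  have hhom : ∀ a b : ℝ, φ (a + b) = φ a * φ b := by
    intro a b
    have : exp ((a + b) • A) = exp (a • A) * exp (b • A) := by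
      rw [add_smul]
      exact Matrix.exp_add_of_commute _ _ ((Commute.refl A).smul_left a |>.smul_right b)
    simp only [φ, this, Matrix.det_mul]
  have hφ0 : φ 0 = 1 := by simp [φ, exp_zero]
  have hd : ∀ u : ℝ, HasDerivAt φ (φ u * A.trace) u := by
    intro u
    have hsub : HasDerivAt (fun v : ℝ => v - u) 1 u := (hasDerivAt_id u).sub_const u
    have h0 : HasDerivAt φ A.trace ((fun v : ℝ => v - u) u) := by
      simpa using aux_det_deriv_zero n A
    have hshift : HasDerivAt (φ ∘ fun v : ℝ => v - u) (A.trace * 1) u :=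
      HasDerivAt.comp (h₂ := φ) (h := fun v : ℝ => v - u) (x := u) h0 hsub
    have hmul : HasDerivAt (fun v : ℝ => φ u * φ (v - u)) (φ u * (A.trace * 1)) u :=
      HasDerivAt.const_mul (φ u) hshift
    have heq : (fun v : ℝ => φ u * φ (v - u)) = φ := by
      funext v
      rw [← hhom u (v - u)]
      congr 1
      ring
    rw [heq] at hmul
    simpa [mul_comm] using hmul
  set ψ : ℝ → ℝ := fun u => φ u * Real.exp (-A.trace * u) with hψ
  have hdψ : ∀ u : ℝ, HasDerivAt ψ 0 u := by
    intro u
    have he : HasDerivAt (fun v : ℝ => Real.exp (-A.trace * v))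
        (Real.exp (-A.trace * u) * (-A.trace * 1)) u :=
      ((hasDerivAt_id u).const_mul (-A.trace)).exp
    have := (hd u).mul he
    refine this.congr_deriv ?_
    ring
  have hconst : ψ s = ψ 0 :=
    is_const_of_deriv_eq_zero (fun x => (hdψ x).differentiableAt)
      (fun x => (hdψ x).deriv) s 0
  have hψ0 : ψ 0 = 1 := by simp [ψ, hφ0]
  have h2 : φ s * Real.exp (-(A.trace * s)) = 1 := by
    simpa [ψ, neg_mul] using hconst.trans hψ0
  rw [Real.exp_neg] at h2
  have hx := Real.exp_ne_zero (A.trace * s)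
  field_simp at h2
  exact h2

open MeasureTheory
open scoped ENNReal

lemma aux_det_toEuclideanLin (n : ℕ) (M : Matrix (Fin n) (Fin n) ℝ) :
    LinearMap.det (Matrix.toEuclideanLin M) = M.det := by
  have hrep : Matrix.toEuclideanLin M =
      ((WithLp.linearEquiv 2 ℝ (Fin n → ℝ)).symm : (Fin n → ℝ) →ₗ[ℝ] EuclideanSpace ℝ (Fin n)) ∘ₗ
        Matrix.toLin' M ∘ₗ
        ((WithLp.linearEquiv 2 ℝ (Fin n → ℝ)) : EuclideanSpace ℝ (Fin n) →ₗ[ℝ] (Fin n → ℝ)) := rfl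
  rw [hrep]
  have h := LinearMap.det_conj (Matrix.toLin' M) (WithLp.linearEquiv 2 ℝ (Fin n → ℝ)).symm
  simpa [LinearMap.det_toLin'] using h

lemma aux_measure_bound (n : ℕ) (L ρ : ℝ) (hL : 0 < L) (hρ : 0 < ρ) (d : ℝ) (hd : 0 < d)
    (α : EuclideanSpace ℝ (Fin n)) (N : ℕ) (c : Fin N → EuclideanSpace ℝ (Fin n))
    (f : EuclideanSpace ℝ (Fin n) →ₗ[ℝ] EuclideanSpace ℝ (Fin n))
    (hdet : LinearMap.det f = d)
    (hcov : (fun x => f x + α) '' Metric.closedBall 0 L ⊆ ⋃ i, Metric.closedBall (c i) ρ) :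
    d * L ^ n ≤ (N : ℝ) * ρ ^ n := by
  set μ : Measure (EuclideanSpace ℝ (Fin n)) := volume
  have hμΓ : μ ((fun x => f x + α) '' Metric.closedBall 0 L) =
      ENNReal.ofReal d * μ (Metric.closedBall (0:EuclideanSpace ℝ (Fin n)) L) := by
    have h1 : (fun x : EuclideanSpace ℝ (Fin n) => f x + α) '' Metric.closedBall 0 L =
        (fun y : EuclideanSpace ℝ (Fin n) => y + α) '' (f '' Metric.closedBall 0 L) := by
      rw [Set.image_image]
    rw [h1, Set.image_add_right, measure_preimage_add_right,
      Measure.addHaar_image_linearMap, hdet, abs_of_pos hd]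
  have hball : ∀ (x : EuclideanSpace ℝ (Fin n)) (s : ℝ), 0 ≤ s →
      μ (Metric.closedBall x s) =
        ENNReal.ofReal (s ^ n) * μ (Metric.ball (0:EuclideanSpace ℝ (Fin n)) 1) := by
    intro x s hs
    rw [Measure.addHaar_closedBall μ x hs, finrank_euclideanSpace_fin]
  have hcover : μ ((fun x => f x + α) '' Metric.closedBall 0 L) ≤
      (N : ℝ≥0∞) * (ENNReal.ofReal (ρ ^ n) *
        μ (Metric.ball (0:EuclideanSpace ℝ (Fin n)) 1)) := by
    calc μ ((fun x => f x + α) '' Metric.closedBall 0 L)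
        ≤ μ (⋃ i, Metric.closedBall (c i) ρ) := measure_mono hcov
      _ ≤ ∑ i : Fin N, μ (Metric.closedBall (c i) ρ) := measure_iUnion_fintype_le μ _
      _ = (N : ℝ≥0∞) * (ENNReal.ofReal (ρ ^ n) *
            μ (Metric.ball (0:EuclideanSpace ℝ (Fin n)) 1)) := by
          rw [Finset.sum_congr rfl fun i _ => hball (c i) ρ hρ.le]
          simp [Finset.sum_const, mul_comm]
  rw [hμΓ, hball 0 L hL.le] at hcover
  have hKpos : 0 < μ (Metric.ball (0:EuclideanSpace ℝ (Fin n)) 1) :=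
    Metric.measure_ball_pos μ 0 one_pos
  have hKfin : μ (Metric.ball (0:EuclideanSpace ℝ (Fin n)) 1) < ⊤ := measure_ball_lt_top
  rw [← mul_assoc, ← mul_assoc] at hcover
  have h3 : ENNReal.ofReal d * ENNReal.ofReal (L ^ n) ≤ (N : ℝ≥0∞) * ENNReal.ofReal (ρ ^ n) :=
    (ENNReal.mul_le_mul_iff_left hKpos.ne' hKfin.ne).1 hcover
  have h4 : ENNReal.ofReal (d * L ^ n) ≤ ENNReal.ofReal ((N : ℝ) * ρ ^ n) := by
    rw [ENNReal.ofReal_mul hd.le]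
    refine h3.trans (le_of_eq ?_)
    rw [ENNReal.ofReal_mul (by positivity)]
    congr 1
    simp
  exact (ENNReal.ofReal_le_ofReal_iff (by positivity)).1 h4

/-- Covering argument proving Theorem 5(i) of the paper (vector case). -/
theorem vector_covering_state_uncertainty_lower_bound
    (n : ℕ) (hn : 1 ≤ n) (A : Matrix (Fin n) (Fin n) ℝ)
    (t σ L r : ℝ) (ht : 0 < t) (hσ : 0 < σ) (hL : 0 < L) (hr : 0 < r)
    (α : EuclideanSpace ℝ (Fin n))
    (N : ℕ) (c : Fin N → EuclideanSpace ℝ (Fin n))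
    (hcov : (fun x : EuclideanSpace ℝ (Fin n) =>
        Matrix.toEuclideanLin (NormedSpace.exp (t • A)) x + α) ''
          Metric.closedBall 0 L ⊆
      ⋃ i, Metric.closedBall (c i) (r * Real.exp (-σ * t))) :
    (N : ℝ) ≥ Real.exp ((Matrix.trace A + n * σ) * t) * (L / r) ^ n := by
  have hdet : LinearMap.det (Matrix.toEuclideanLin (NormedSpace.exp (t • A))) =
      Real.exp (A.trace * t) := by
    rw [aux_det_toEuclideanLin, aux_det_exp]
  have key : Real.exp (A.trace * t) * L ^ n ≤ (N : ℝ) * (r * Real.exp (-σ * t)) ^ n :=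
    aux_measure_bound n L (r * Real.exp (-σ * t)) hL (by positivity)
      (Real.exp (A.trace * t)) (Real.exp_pos _) α N c _ hdet hcov
  rw [ge_iff_le]
  have heq : Real.exp ((Matrix.trace A + n * σ) * t) * (L / r) ^ n =
      (Real.exp (A.trace * t) * L ^ n) / (r * Real.exp (-σ * t)) ^ n := by
    have hexpand : Real.exp ((A.trace + n * σ) * t) =
        Real.exp (A.trace * t) * Real.exp (σ * t) ^ n := by
      rw [← Real.exp_nat_mul, ← Real.exp_add]
      ring_nf
    rw [hexpand, div_pow, mul_pow, show -σ * t = -(σ * t) by ring, Real.exp_neg, inv_pow]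
    have h1 : (Real.exp (σ * t)) ^ n ≠ 0 := by positivity
    field_simp
  rw [heq]
  exact (div_le_iff₀ (by positivity)).2 key
end

section
/- Let n ≥ 1, let A be a real n×n matrix, let t ≥ 0, σ > 0, L > 0. (i) For every α ∈ ℝⁿ (Euclidean space), the set {x ∈ ℝⁿ : ‖exp(tA)·x + α‖ ≤ L·exp(−σt)} has Lebesgue measure exp(−t·trace(A))·exp(−nσt) times the volume of the closed Euclidean ball of radius L. (ii) Consequently, if the closed ball {x : ‖x‖ ≤ L} is contained in ⋃_{i=1}^N {x ∈ ℝⁿ : ‖exp(tA)·x + α_i‖ ≤ L·exp(−σt)} for some α_1, …, α_N ∈ ℝⁿ, then N ≥ exp((trace(A) + nσ)·t). -/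
open MeasureTheory

open NormedSpace

lemma diff_prod {E : Type*} [NormedAddCommGroup E] [NormedSpace ℝ E]
    {ι : Type*} (s : Finset ι) (f : ι → E → ℝ) (hf : ∀ i, Differentiable ℝ (f i)) :
    Differentiable ℝ (fun x => ∏ i ∈ s, f i x) := by
  classical
  induction s using Finset.induction_on with
  | empty => simpa using differentiable_const (1 : ℝ)
  | insert _ _ hns ih => simp only [Finset.prod_insert hns]; exact (hf _).mul ih

section
variable (n : ℕ)
attribute [local instance] Matrix.linftyOpNormedAddCommGroup Matrix.linftyOpNormedRing
  Matrix.linftyOpNormedAlgebra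

lemma diff_det : Differentiable ℝ (Matrix.det : Matrix (Fin n) (Fin n) ℝ → ℝ) := by
  have h : (Matrix.det : Matrix (Fin n) (Fin n) ℝ → ℝ) =
      fun M => ∑ σ : Equiv.Perm (Fin n), ((Equiv.Perm.sign σ : ℤ) : ℝ) * ∏ i, M (σ i) i :=
    funext fun M => Matrix.det_apply' M
  rw [h]
  refine Differentiable.fun_sum fun σ _ => Differentiable.const_mul ?_ _
  exact diff_prod Finset.univ (fun i (M : Matrix (Fin n) (Fin n) ℝ) => M (σ i) i)
    fun i => ((Matrix.entryLinearMap ℝ ℝ (σ i) i).toContinuousLinearMap).differentiable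
end

section
variable {n : ℕ}
attribute [local instance] Matrix.linftyOpNormedAddCommGroup Matrix.linftyOpNormedRing
  Matrix.linftyOpNormedAlgebra

lemma det_exp_smul (A : Matrix (Fin n) (Fin n) ℝ) (t : ℝ) :
    (NormedSpace.exp (t • A)).det = Real.exp (t * A.trace) := by
  set D := fderiv ℝ (Matrix.det : Matrix (Fin n) (Fin n) ℝ → ℝ) 1 with hD
  have hF : HasFDerivAt (Matrix.det : Matrix (Fin n) (Fin n) ℝ → ℝ) D 1 :=
    (diff_det n 1).hasFDerivAt
  -- derivative of u ↦ det (1 + u • A) at 0 is trace A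
  have h1 : HasDerivAt (fun u : ℝ => Matrix.det (1 + u • A)) A.trace 0 := by
    have key : (fun u : ℝ => Matrix.det (1 + u • A)) = fun u =>
        1 + A.trace * u + (Matrix.det (1 + (Polynomial.X : Polynomial ℝ) •
          A.map Polynomial.C)).divX.divX.eval u * u ^ 2 :=
      funext fun u => Matrix.det_one_add_smul u A
    rw [key]
    set q := (Matrix.det (1 + (Polynomial.X : Polynomial ℝ) • A.map Polynomial.C)).divX.divX
    have := ((hasDerivAt_const (0:ℝ) (1:ℝ)).add
        ((hasDerivAt_id (0:ℝ)).const_mul A.trace)).add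
      ((q.hasDerivAt (0:ℝ)).mul (hasDerivAt_pow 2 (0:ℝ)))
    simpa [Pi.add_def, Pi.mul_def] using this
  -- chain rule: D A = trace A
  have hid : HasDerivAt (fun u : ℝ => (1 : Matrix (Fin n) (Fin n) ℝ) + u • A) A 0 := by
    have := (((hasDerivAt_id (0:ℝ)).smul_const A).const_add
      (1 : Matrix (Fin n) (Fin n) ℝ))
    rw [one_smul] at this
    exact this
  have hF1 : HasFDerivAt (Matrix.det : Matrix (Fin n) (Fin n) ℝ → ℝ) D
      ((fun u : ℝ => (1 : Matrix (Fin n) (Fin n) ℝ) + u • A) 0) := by simpa using hF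
  have e1 : HasDerivAt (fun u : ℝ => Matrix.det (1 + u • A)) (D A) 0 :=
    hF1.comp_hasDerivAt 0 hid
  have hDA : D A = A.trace := e1.unique h1
  -- derivative of g := u ↦ det (exp (u • A)) at 0 is trace A
  have hexp0 : HasDerivAt (fun u : ℝ => NormedSpace.exp (u • A)) A 0 := by
    have := hasDerivAt_exp_smul_const A (0:ℝ)
    simp at this
    exact this
  have hF2 : HasFDerivAt (Matrix.det : Matrix (Fin n) (Fin n) ℝ → ℝ) D
      ((fun u : ℝ => NormedSpace.exp (u • A)) 0) := by
    simpa using hF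
  have hg0 : HasDerivAt (fun u : ℝ => (NormedSpace.exp (u • A)).det) A.trace 0 := by
    have := hF2.comp_hasDerivAt 0 hexp0
    exact this.congr_deriv hDA
  -- f has derivative trace A * f s everywhere
  set f : ℝ → ℝ := fun s => (NormedSpace.exp (s • A)).det with hf_def
  have hsplit : ∀ s x : ℝ, f x = f s * f (x - s) := by
    intro s x
    have hc : Commute (s • A) ((x - s) • A) := ((Commute.refl A).smul_left s).smul_right _
    have : NormedSpace.exp (x • A) = NormedSpace.exp (s • A) * NormedSpace.exp ((x - s) • A) := by
      have := NormedSpace.exp_add_of_commute hc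
      rw [← add_smul, add_sub_cancel] at this
      exact this
    simp only [hf_def, this, Matrix.det_mul]
  have hf' : ∀ s : ℝ, HasDerivAt f (A.trace * f s) s := by
    intro s
    have h2 : HasDerivAt (fun x : ℝ => f s * f (x - s)) (f s * A.trace) s := by
      have h3 : HasDerivAt (fun x : ℝ => f (x - s)) A.trace s := by
        have h4 : HasDerivAt (fun x : ℝ => x - s) 1 s := (hasDerivAt_id s).sub_const s
        have hg0' : HasDerivAt f A.trace ((fun x : ℝ => x - s) s) := by
          simpa using hg0
        have h5 : HasDerivAt (f ∘ fun x => x - s) (A.trace * 1) s :=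
          HasDerivAt.comp (h := fun x : ℝ => x - s) (h₂ := f) s hg0' h4
        simpa [Function.comp_def] using h5
      exact h3.const_mul (f s)
    have : (fun x : ℝ => f s * f (x - s)) = f := funext fun x => (congrArg _ rfl).trans (hsplit s x).symm
    rw [this] at h2
    rw [mul_comm]
    exact h2
  -- solve the ODE
  have hzero : ∀ s : ℝ, HasDerivAt (fun x : ℝ => f x * Real.exp (-A.trace * x)) 0 s := by
    intro s
    have he : HasDerivAt (fun x : ℝ => Real.exp (-A.trace * x))
        (Real.exp (-A.trace * s) * -A.trace) s :=
      by simpa using ((hasDerivAt_id s).const_mul (-A.trace)).exp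
    have := (hf' s).fun_mul he
    exact this.congr_deriv (by ring)
  have hconst : f t * Real.exp (-A.trace * t) = f 0 * Real.exp (-A.trace * 0) := by
    apply is_const_of_deriv_eq_zero (fun x => ((hzero x).differentiableAt))
    exact fun x => (hzero x).deriv
  have hf0 : f 0 = 1 := by simp [hf_def]
  rw [hf0, one_mul, mul_zero, Real.exp_zero] at hconst
  rw [neg_mul, Real.exp_neg] at hconst
  have hpos : Real.exp (A.trace * t) ≠ 0 := Real.exp_ne_zero _
  field_simp at hconst
  show f t = Real.exp (t * A.trace)
  rw [hconst, mul_comm]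
end

lemma det_toEuclideanLin {n : ℕ} (M : Matrix (Fin n) (Fin n) ℝ) :
    LinearMap.det (Matrix.toEuclideanLin M) = M.det := by
  have h : Matrix.toEuclideanLin M =
      ((WithLp.linearEquiv 2 ℝ (Fin n → ℝ)).symm : (Fin n → ℝ) ≃ₗ[ℝ] EuclideanSpace ℝ (Fin n)).toLinearMap
        ∘ₗ Matrix.toLin' M ∘ₗ
      ((WithLp.linearEquiv 2 ℝ (Fin n → ℝ)).symm : (Fin n → ℝ) ≃ₗ[ℝ] EuclideanSpace ℝ (Fin n)).symm.toLinearMap := rfl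
  rw [h, LinearMap.det_conj, LinearMap.det_toLin']

/-- Covering argument proving Theorem 5(ii) of the paper (vector case). -/
theorem vector_initial_condition_covering_lower_bound
    (n : ℕ) (hn : 1 ≤ n) (A : Matrix (Fin n) (Fin n) ℝ)
    (t σ L : ℝ) (ht : 0 ≤ t) (hσ : 0 < σ) (hL : 0 < L) :
    (∀ α : EuclideanSpace ℝ (Fin n),
      volume {x : EuclideanSpace ℝ (Fin n) |
          ‖Matrix.toEuclideanLin (NormedSpace.exp (t • A)) x + α‖ ≤ L * Real.exp (-σ * t)} =
        ENNReal.ofReal (Real.exp (-(t * Matrix.trace A)) * Real.exp (-(n * σ * t))) *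
          volume (Metric.closedBall (0 : EuclideanSpace ℝ (Fin n)) L)) ∧
    (∀ (N : ℕ) (α : Fin N → EuclideanSpace ℝ (Fin n)),
      Metric.closedBall (0 : EuclideanSpace ℝ (Fin n)) L ⊆
        ⋃ i, {x : EuclideanSpace ℝ (Fin n) |
          ‖Matrix.toEuclideanLin (NormedSpace.exp (t • A)) x + α i‖ ≤ L * Real.exp (-σ * t)} →
      (N : ℝ) ≥ Real.exp ((Matrix.trace A + n * σ) * t)) := by
  set T := Matrix.toEuclideanLin (NormedSpace.exp (t • A)) with hT
  have hTdet : LinearMap.det T = Real.exp (t * A.trace) := by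
    rw [hT, det_toEuclideanLin, det_exp_smul]
  have hTne : LinearMap.det T ≠ 0 := by rw [hTdet]; exact Real.exp_ne_zero _
  set r := L * Real.exp (-σ * t) with hr
  have hr0 : 0 ≤ r := by positivity
  have key : ∀ α : EuclideanSpace ℝ (Fin n),
      volume {x : EuclideanSpace ℝ (Fin n) | ‖T x + α‖ ≤ r} =
        ENNReal.ofReal (Real.exp (-(t * A.trace)) * Real.exp (-(n * σ * t))) *
          volume (Metric.closedBall (0 : EuclideanSpace ℝ (Fin n)) L) := by
    intro α
    have hset : {x : EuclideanSpace ℝ (Fin n) | ‖T x + α‖ ≤ r} =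
        T ⁻¹' Metric.closedBall (-α) r := by
      ext x
      simp [Metric.mem_closedBall, dist_eq_norm, sub_neg_eq_add]
    rw [hset, Measure.addHaar_preimage_linearMap volume hTne,
      Measure.addHaar_closedBall volume (-α) hr0,
      Measure.addHaar_closedBall volume (0 : EuclideanSpace ℝ (Fin n)) hL.le]
    rw [hTdet, finrank_euclideanSpace_fin]
    have h1 : |(Real.exp (t * A.trace))⁻¹| = Real.exp (-(t * A.trace)) := by
      rw [abs_of_pos (inv_pos.mpr (Real.exp_pos _)), ← Real.exp_neg]
    have h2 : r ^ n = L ^ n * Real.exp (-(n * σ * t)) := by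
      rw [hr, mul_pow, ← Real.exp_nat_mul]
      congr 1
      ring
    rw [h1, h2, ENNReal.ofReal_mul (by positivity), ENNReal.ofReal_mul (by positivity)]
    ring
  refine ⟨key, fun N α hcover => ?_⟩
  set V := volume (Metric.closedBall (0 : EuclideanSpace ℝ (Fin n)) L) with hV
  have hV0 : V ≠ 0 := (Metric.measure_closedBall_pos volume (0 : EuclideanSpace ℝ (Fin n)) hL).ne'
  have hVtop : V ≠ ⊤ := measure_closedBall_lt_top.ne
  set c := Real.exp (-(t * A.trace)) * Real.exp (-(n * σ * t)) with hc
  have hc0 : 0 ≤ c := by positivity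
  have hle : V ≤ (N : ENNReal) * (ENNReal.ofReal c * V) := by
    have s1 : V ≤ volume (⋃ i, {x : EuclideanSpace ℝ (Fin n) | ‖T x + α i‖ ≤ r}) :=
      measure_mono hcover
    have s2 : volume (⋃ i, {x : EuclideanSpace ℝ (Fin n) | ‖T x + α i‖ ≤ r}) ≤
        ∑ i : Fin N, volume {x : EuclideanSpace ℝ (Fin n) | ‖T x + α i‖ ≤ r} :=
      measure_iUnion_fintype_le volume _
    have s3 : ∑ i : Fin N, volume {x : EuclideanSpace ℝ (Fin n) | ‖T x + α i‖ ≤ r} =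
        (N : ENNReal) * (ENNReal.ofReal c * V) := by
      simp [key, Finset.sum_const, mul_comm]
    exact s1.trans (s2.trans_eq s3)
  have h1le : (1 : ENNReal) ≤ (N : ENNReal) * ENNReal.ofReal c := by
    rw [← ENNReal.mul_le_mul_iff_left hV0 hVtop, one_mul]
    rw [← mul_assoc] at hle
    exact hle
  have h1le' : (1 : ℝ) ≤ (N : ℝ) * c := by
    have : (1 : ENNReal) ≤ ENNReal.ofReal ((N : ℝ) * c) := by
      rwa [ENNReal.ofReal_mul (by positivity), ENNReal.ofReal_natCast]
    exact_mod_cast ENNReal.one_le_ofReal.mp this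
  have hcc : c = Real.exp (-((A.trace + n * σ) * t)) := by
    rw [hc, ← Real.exp_add]
    congr 1
    ring
  rw [hcc] at h1le'
  have := mul_le_mul_of_nonneg_right h1le' (Real.exp_pos ((A.trace + n * σ) * t)).le
  rw [one_mul, mul_assoc, ← Real.exp_add, neg_add_cancel, Real.exp_zero, mul_one] at this
  exact this
end

section
/- Let λ, σ, γ > 0 and let ρ′, ρ0 satisfy 0 < ρ′ < ρ0 < 1. Let v, v′ > 0 satisfy v′ ≤ v·(λ+σ)·(ρ0 − ρ′) / ( ((ρ0 − ρ′) + exp((λ+σ)γ)) · (exp((λ+σ)γ) − 1) ). Let t ∈ ℝ and let z : ℝ → ℝ be a measurable function with |z(τ)| ≤ v′·exp((σ+λ)γ)·exp(−στ) for all τ ∈ [t − γ, t]. Then |∫_{t−γ}^{t} exp(λ·(t − τ))·z(τ) dτ| ≤ (ρ0 − ρ′)·v·exp(−σt). -/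
/-- Inequality (uppercoup) of the paper: the coupling integral term from coordinate i
into coordinate i−1 is bounded by (ρ0 − ρ′)·v·exp(−σt). -/
theorem coupling_integral_cascade_bound
    (lam σ γ ρ' ρ0 : ℝ) (hlam : 0 < lam) (hσ : 0 < σ) (hγ : 0 < γ)
    (hρ' : 0 < ρ') (hρ'ρ0 : ρ' < ρ0) (hρ0 : ρ0 < 1)
    (v v' : ℝ) (hv : 0 < v) (hv' : 0 < v')
    (hcascade : v' ≤ v * (lam + σ) * (ρ0 - ρ') /
      (((ρ0 - ρ') + Real.exp ((lam + σ) * γ)) * (Real.exp ((lam + σ) * γ) - 1)))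
    (t : ℝ) (z : ℝ → ℝ) (hmeas : Measurable z)
    (hz : ∀ τ ∈ Set.Icc (t - γ) t,
      |z τ| ≤ v' * Real.exp ((σ + lam) * γ) * Real.exp (-σ * τ)) :
    |∫ τ in (t - γ)..t, Real.exp (lam * (t - τ)) * z τ| ≤
      (ρ0 - ρ') * v * Real.exp (-σ * t) := by
  have hc : (0:ℝ) < lam + σ := by linarith
  set c := lam + σ with hcdef
  set E := Real.exp (c * γ) with hEdef
  have hE1 : 1 < E := by
    have := Real.add_one_lt_exp (ne_of_gt (mul_pos hc hγ))
    rw [hEdef]; nlinarith [mul_pos hc hγ]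
  have hKE : Real.exp ((σ + lam) * γ) = E := by rw [hEdef, hcdef]; ring_nf
  -- key algebraic inequality
  have hkey : v' * E * (E - 1) ≤ (ρ0 - ρ') * v * c := by
    have hD : 0 < ((ρ0 - ρ') + E) * (E - 1) := by nlinarith
    have h1 : v' * (((ρ0 - ρ') + E) * (E - 1)) ≤ v * c * (ρ0 - ρ') :=
      (le_div_iff₀ hD).mp hcascade
    nlinarith [mul_pos hv' (sub_pos.mpr hE1), hρ'ρ0]
  set K := v' * Real.exp ((σ + lam) * γ) with hKdef
  have hab : t - γ ≤ t := by linarith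
  -- pointwise bound
  have hpt : ∀ᵐ τ ∂MeasureTheory.volume.restrict (Set.uIoc (t - γ) t),
      ‖Real.exp (lam * (t - τ)) * z τ‖ ≤
        Real.exp (lam * (t - τ)) * (K * Real.exp (-σ * τ)) := by
    rw [Set.uIoc_of_le hab]
    refine (MeasureTheory.ae_restrict_iff' measurableSet_Ioc).mpr
      (Filter.Eventually.of_forall fun τ hτ => ?_)
    have hτ' : τ ∈ Set.Icc (t - γ) t := Set.Ioc_subset_Icc_self hτ
    have h1 := hz τ hτ'
    have h2 : (0:ℝ) ≤ Real.exp (lam * (t - τ)) := (Real.exp_pos _).le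
    rw [norm_mul, Real.norm_eq_abs, Real.norm_eq_abs, abs_of_nonneg h2]
    exact mul_le_mul_of_nonneg_left h1 h2
  have hgint : IntervalIntegrable
      (fun τ => Real.exp (lam * (t - τ)) * (K * Real.exp (-σ * τ)))
      MeasureTheory.volume (t - γ) t := by
    apply Continuous.intervalIntegrable; fun_prop
  have hbnd := intervalIntegral.norm_integral_le_abs_of_norm_le hpt hgint
  rw [Real.norm_eq_abs] at hbnd
  refine le_trans hbnd ?_
  -- rewrite g as constant times exp
  have hg : (fun τ => Real.exp (lam * (t - τ)) * (K * Real.exp (-σ * τ)))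
      = fun τ => (K * Real.exp (lam * t)) * Real.exp ((-c) * τ) := by
    funext τ
    rw [mul_left_comm, ← Real.exp_add,
      show lam * (t - τ) + -σ * τ = lam * t + (-c) * τ by rw [hcdef]; ring,
      Real.exp_add, ← mul_assoc]
  rw [hg, intervalIntegral.integral_const_mul,
    intervalIntegral.integral_comp_mul_left (fun x => Real.exp x) (by nlinarith : (-c) ≠ 0),
    integral_exp]
  have e1 : Real.exp (-c * (t - γ)) = E * Real.exp (-σ * t) * Real.exp (-(lam * t)) := by
    rw [hEdef, ← Real.exp_add, ← Real.exp_add]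
    congr 1; rw [hcdef]; ring
  have e2 : Real.exp (-c * t) = Real.exp (-σ * t) * Real.exp (-(lam * t)) := by
    rw [← Real.exp_add]; congr 1; rw [hcdef]; ring
  have hval : K * Real.exp (lam * t) * ((-c)⁻¹ • (Real.exp (-c * t) - Real.exp (-c * (t - γ))))
      = v' * E * (E - 1) / c * Real.exp (-σ * t) := by
    have hcne : c ≠ 0 := ne_of_gt hc
    have hexp : Real.exp (lam * t) * Real.exp (-(lam * t)) = 1 := by
      rw [← Real.exp_add]; simp
    have h3 : ((-c)⁻¹ : ℝ) • (Real.exp (-c * t) - Real.exp (-c * (t - γ)))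
        = (Real.exp (-c * (t - γ)) - Real.exp (-c * t)) / c := by
      rw [smul_eq_mul, div_eq_inv_mul, inv_neg]
      ring
    rw [h3, e1, e2, hKdef, hKE, ← mul_div_assoc, div_mul_eq_mul_div]
    congr 1
    linear_combination (v' * E * (E - 1) * Real.exp (-σ * t)) * hexp
  rw [hval]
  have hpos : 0 ≤ v' * E * (E - 1) / c * Real.exp (-σ * t) :=
    mul_nonneg (div_nonneg
      (le_of_lt (mul_pos (mul_pos hv' (by linarith)) (by linarith))) hc.le)
      (Real.exp_pos _).le
  rw [abs_of_nonneg hpos]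
  have : v' * E * (E - 1) / c ≤ (ρ0 - ρ') * v := by
    rw [div_le_iff₀ hc]; nlinarith
  nlinarith [Real.exp_pos (-σ * t), mul_le_mul_of_nonneg_right this (Real.exp_pos (-σ * t)).le]
end
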